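/- Let φ be an SCNN with L layers, feature dimensions F₀,…,F_L, continuous filters, and Lipschitz continuous activation ρ. Let (A_n)_{n∈ℕ} be symmetric matrices A_n ∈ ℝ^{n×n} and W a graphon with ‖T_{W_{A_n}} − T_W‖_{L²[0,1]→L²[0,1]} → 0. Let (y_n)_n be a sequence in (L²[0,1])^{F₀} and y ∈ (L²[0,1])^{F₀} with max_{k=1,…,F₀} ‖y_n^k − y^k‖_{L²[0,1]} → 0. Then max_{j=1,…,F_L} ‖φ_{W_{A_n}}(y_n)^j − φ_W(y)^j‖_{L²[0,1]} → 0 as n → ∞. -/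

import Mathlib

open MeasureTheory Filter

noncomputable section

/-- Lebesgue measure restricted to `[0,1]`. -/
abbrev μ01 : Measure ℝ := volume.restrict (Set.Icc 0 1)

instance : IsFiniteMeasure μ01 := by
  constructor
  rw [Measure.restrict_apply_univ, Real.volume_Icc]
  exact ENNReal.ofReal_lt_top

/-- The space `L²[0,1]` (complex valued). -/
abbrev L2 := Lp ℂ 2 μ01

/-- The `j`-th interval `P_j = [j/n, (j+1)/n)` of the standard partition of `[0,1]`
(0-indexed version of `[(j-1)/n, j/n)`). -/
def part (n : ℕ) (j : Fin n) : Set ℝ := Set.Ico ((j : ℝ) / n) (((j : ℝ) + 1) / n)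

lemma part_meas (n : ℕ) (j : Fin n) : MeasurableSet (part n j) := measurableSet_Ico

lemma part_ne_top (n : ℕ) (j : Fin n) : μ01 (part n j) ≠ ⊤ := (measure_lt_top _ _).ne

/-- The graphon `W_B` induced by an `n × n` matrix `B`:
`W_B(u,v) = ∑_{i,j} B i j · 1_{P_i}(u) · 1_{P_j}(v)`. -/
def inducedGraphon {n : ℕ} (B : Matrix (Fin n) (Fin n) ℝ) : ℝ → ℝ → ℝ :=
  fun u v => ∑ i, ∑ j, B i j * (part n i).indicator 1 u * (part n j).indicator 1 v

/-- The graphon signal `ψ_x = ∑_j x_j · 1_{P_j} ∈ L²[0,1]` induced by `x ∈ ℂⁿ`. -/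
def inducedSignal {n : ℕ} (x : Fin n → ℂ) : L2 :=
  ∑ j, indicatorConstLp 2 (part_meas n j) (part_ne_top n j) (x j)

/-- `W` is a graphon: bounded, symmetric and measurable `[0,1]² → ℝ`
(realized as a function on all of `ℝ²`; only its values matter w.r.t. `μ01`). -/
structure IsGraphon (W : ℝ → ℝ → ℝ) : Prop where
  symm : ∀ u v, W u v = W v u
  meas : Measurable (Function.uncurry W)
  bdd : ∃ C, ∀ u v, |W u v| ≤ C

/-- `T` is the graphon shift operator of `W`: `(T f)(v) = ∫₀¹ W(v,u) f(u) du`. -/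
def IsGRSO (W : ℝ → ℝ → ℝ) (T : L2 →L[ℂ] L2) : Prop :=
  ∀ f : L2, ∀ᵐ v ∂μ01, T f v = ∫ u, (W v u : ℂ) * f u ∂μ01

/-- Entrywise complexification of a real activation function. -/
def rhoC (ρ : ℝ → ℝ) (z : ℂ) : ℂ := (ρ z.re : ℂ) + (ρ z.im : ℂ) * Complex.I

/-- The realization of an SCNN (filters `filt`, weights `wt`, activation `ρ`) on a graph with
GSO `Δ`: `graphNet F filt wt ρ Δ x l j` is the `j`-th feature of the `l`-th layer, on input
feature map `x`.  Layer `l+1` is obtained from layer `l` via the filters `filt l j k`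
and weights `wt l j k`. -/
def graphNet (F : ℕ → ℕ) (filt : ℕ → ℕ → ℕ → ℝ → ℝ) (wt : ℕ → ℕ → ℕ → ℝ)
    (ρ : ℝ → ℝ) {n : ℕ} (Δ : Matrix (Fin n) (Fin n) ℝ) (x : ℕ → Fin n → ℂ) :
    ℕ → ℕ → Fin n → ℂ
  | 0, j => x j
  | (l + 1), j => fun v =>
      rhoC ρ (∑ k ∈ Finset.range (F l),
        (wt l j k : ℂ) * (((cfc (filt l j k) Δ).map Complex.ofReal).mulVec
          (graphNet F filt wt ρ Δ x l k)) v)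

instance instCFCRealL2 : ContinuousFunctionalCalculus ℝ (L2 →L[ℂ] L2) IsSelfAdjoint :=
  IsSelfAdjoint.instContinuousFunctionalCalculus

/-- `y` is a realization of the SCNN (filters `filt`, weights `wt`, activation `ρ`,
`Lnum` layers, feature dimensions `F`) on the graphon shift operator `T`:
`y l j` is the `j`-th feature of the `l`-th layer, and each layer is obtained from the
previous one by filtering with `cfc (filt l j k) T`, taking weighted sums, and applying
the activation pointwise almost everywhere. -/
def IsGraphonNet (Lnum : ℕ) (F : ℕ → ℕ) (filt : ℕ → ℕ → ℕ → ℝ → ℝ) (wt : ℕ → ℕ → ℕ → ℝ)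
    (ρ : ℝ → ℝ) (T : L2 →L[ℂ] L2) (y : ℕ → ℕ → L2) : Prop :=
  ∀ l < Lnum, ∀ j < F (l + 1),
    ⇑(y (l + 1) j) =ᵐ[μ01]
      fun v => rhoC ρ
        (((∑ k ∈ Finset.range (F l),
          (wt l j k : ℂ) • (cfc (filt l j k) T) (y l k) : L2) : ℝ → ℂ) v)


/-! ### Auxiliary lemmas -/

instance : Nontrivial L2 := by
  have h : ‖indicatorConstLp 2 measurableSet_Icc ((measure_lt_top μ01 (Set.Icc 0 1)).ne) (1:ℂ)‖ = 1 := by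
    rw [norm_indicatorConstLp (by norm_num) (by norm_num)]
    rw [measureReal_restrict_apply measurableSet_Icc]
    simp [Real.volume_real_Icc]
  refine ⟨⟨indicatorConstLp 2 measurableSet_Icc ((measure_lt_top μ01 (Set.Icc 0 1)).ne) (1:ℂ), 0,
    fun hc => ?_⟩⟩
  rw [hc, norm_zero] at h
  exact one_ne_zero h.symm

lemma isSelfAdjoint_of_isGRSO {W : ℝ → ℝ → ℝ} (hW : IsGraphon W) {T : L2 →L[ℂ] L2}
    (hT : IsGRSO W T) : IsSelfAdjoint T := by
  rw [ContinuousLinearMap.isSelfAdjoint_iff_isSymmetric]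
  intro f g
  obtain ⟨C, hC⟩ := hW.bdd
  have hfi : Integrable (⇑f) μ01 := (Lp.memLp f).integrable (by norm_num)
  have hgi : Integrable (⇑g) μ01 := (Lp.memLp g).integrable (by norm_num)
  set Φ : ℝ → ℝ → ℂ := fun v u => (W v u : ℂ) * ((starRingEnd ℂ) (f u) * g v) with hΦ
  have hint : Integrable (Function.uncurry Φ) (μ01.prod μ01) := by
    have hb : Integrable (fun p : ℝ × ℝ => C * (‖g p.1‖ * ‖f p.2‖)) (μ01.prod μ01) :=
      (hgi.norm.mul_prod hfi.norm).const_mul C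
    refine hb.mono' ?_ ?_
    · exact ((Complex.measurable_ofReal.comp hW.meas).aestronglyMeasurable.mul
        ((Complex.continuous_conj.comp_aestronglyMeasurable
          (Lp.aestronglyMeasurable f).comp_snd).mul (Lp.aestronglyMeasurable g).comp_fst))
    · refine Eventually.of_forall fun p => ?_
      have h1 : ‖((W p.1 p.2 : ℝ) : ℂ)‖ ≤ C := by
        rw [Complex.norm_real]; exact hC _ _
      calc ‖Function.uncurry Φ p‖ = ‖((W p.1 p.2 : ℝ):ℂ)‖ * (‖f p.2‖ * ‖g p.1‖) := by
            simp [Function.uncurry, hΦ, norm_mul, RCLike.norm_conj]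
        _ ≤ C * (‖f p.2‖ * ‖g p.1‖) := mul_le_mul_of_nonneg_right h1 (by positivity)
        _ = C * (‖g p.1‖ * ‖f p.2‖) := by ring
  calc (inner ℂ (T f) g : ℂ)
      = ∫ v, (starRingEnd ℂ) ((T f) v) * g v ∂μ01 := by
        rw [L2.inner_def]; simp only [RCLike.inner_apply']
    _ = ∫ v, (starRingEnd ℂ) (∫ u, (W v u : ℂ) * f u ∂μ01) * g v ∂μ01 :=
        integral_congr_ae ((hT f).mono fun v hv => by
          show (starRingEnd ℂ) ((T f) v) * g v = _
          rw [hv])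
    _ = ∫ v, ∫ u, Φ v u ∂μ01 ∂μ01 := by
        refine integral_congr_ae (Eventually.of_forall fun v => ?_)
        show (starRingEnd ℂ) (∫ u, (W v u : ℂ) * f u ∂μ01) * g v = ∫ u, Φ v u ∂μ01
        rw [← integral_conj, ← integral_mul_const]
        refine integral_congr_ae (Eventually.of_forall fun u => ?_)
        simp only [hΦ, map_mul, Complex.conj_ofReal]
        ring
    _ = ∫ u, ∫ v, Φ v u ∂μ01 ∂μ01 := integral_integral_swap hint
    _ = ∫ v, (starRingEnd ℂ) (f v) * (∫ u, (W v u : ℂ) * g u ∂μ01) ∂μ01 := by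
        refine integral_congr_ae (Eventually.of_forall fun a => ?_)
        show (∫ v, Φ v a ∂μ01) = (starRingEnd ℂ) (f a) * ∫ u, (W a u : ℂ) * g u ∂μ01
        rw [← integral_const_mul]
        refine integral_congr_ae (Eventually.of_forall fun b => ?_)
        simp only [hΦ, hW.symm b a]
        ring
    _ = inner ℂ f (T g) := by
        rw [L2.inner_def]
        refine (integral_congr_ae ((hT g).mono fun v hv => ?_)).symm
        simp only [RCLike.inner_apply', hv]

lemma inducedGraphon_isGraphon {n : ℕ} (B : Matrix (Fin n) (Fin n) ℝ) (hB : B.IsSymm) :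
    IsGraphon (inducedGraphon B) := by
  classical
  constructor
  · intro u v
    unfold inducedGraphon
    rw [Finset.sum_comm]
    refine Finset.sum_congr rfl fun i _ => Finset.sum_congr rfl fun j _ => ?_
    rw [hB.apply j i]
    ring
  · have he : Function.uncurry (inducedGraphon B) = fun p : ℝ × ℝ =>
        ∑ i, ∑ j, B i j * (part n i).indicator 1 p.1 * (part n j).indicator 1 p.2 := rfl
    rw [he]
    refine Finset.measurable_sum _ fun i _ => Finset.measurable_sum _ fun j _ => ?_
    refine (measurable_const.mul ?_).mul ?_
    · exact (measurable_const.indicator (part_meas n i)).comp measurable_fst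
    · exact (measurable_const.indicator (part_meas n j)).comp measurable_snd
  · refine ⟨∑ i, ∑ j, |B i j|, fun u v => ?_⟩
    unfold inducedGraphon
    refine (Finset.abs_sum_le_sum_abs _ _).trans (Finset.sum_le_sum fun i _ =>
      (Finset.abs_sum_le_sum_abs _ _).trans (Finset.sum_le_sum fun j _ => ?_))
    have ha : |(part n i).indicator (1 : ℝ → ℝ) u| ≤ 1 := by
      rw [Set.indicator_apply]; split <;> simp
    have hb : |(part n j).indicator (1 : ℝ → ℝ) v| ≤ 1 := by
      rw [Set.indicator_apply]; split <;> simp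
    calc |B i j * (part n i).indicator 1 u * (part n j).indicator 1 v|
        = |B i j| * |(part n i).indicator (1 : ℝ → ℝ) u| * |(part n j).indicator (1 : ℝ → ℝ) v| := by
          rw [abs_mul, abs_mul]
      _ ≤ |B i j| * 1 * 1 := by
          have h0 := abs_nonneg (B i j)
          have h2 := abs_nonneg ((part n j).indicator (1 : ℝ → ℝ) v)
          exact mul_le_mul (mul_le_mul_of_nonneg_left ha h0) hb h2 (by positivity)
      _ = |B i j| := by ring

open Polynomial in
lemma cfc_tendsto {f : ℝ → ℝ} (hf : Continuous f) {S : ℕ → L2 →L[ℂ] L2} {S0 : L2 →L[ℂ] L2}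
    (hsa : ∀ n, IsSelfAdjoint (S n)) (hsa0 : IsSelfAdjoint S0)
    (h : Tendsto (fun n => ‖S n - S0‖) atTop (nhds 0)) :
    Tendsto (fun n => ‖cfc f (S n) - cfc f S0‖) atTop (nhds 0) := by
  have h' : Tendsto S atTop (nhds S0) := tendsto_iff_norm_sub_tendsto_zero.mpr h
  rw [← tendsto_iff_norm_sub_tendsto_zero]
  obtain ⟨B, hB⟩ := h.bddAbove_range
  simp only [mem_upperBounds, Set.mem_range, forall_exists_index] at hB
  set M : ℝ := B + ‖S0‖ with hM
  have hSM : ∀ n, ‖S n‖ ≤ M := fun n => by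
    have h1 : ‖S n‖ ≤ ‖S n - S0‖ + ‖S0‖ := by
      simpa using norm_add_le (S n - S0) S0
    have h2 : ‖S n - S0‖ ≤ B := hB _ n rfl
    linarith
  have hS0M : ‖S0‖ ≤ M := by
    have : (0:ℝ) ≤ B := le_trans (norm_nonneg _) (hB _ 0 rfl)
    simp only [hM]; linarith
  rw [Metric.tendsto_atTop]
  intro ε hε
  obtain ⟨q, hq⟩ := exists_polynomial_near_of_continuousOn (-M) M f hf.continuousOn (ε/3)
    (by positivity)
  have key : ∀ a : L2 →L[ℂ] L2, IsSelfAdjoint a → ‖a‖ ≤ M → ‖cfc f a - aeval a q‖ ≤ ε/3 := by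
    intro a ha haM
    rw [← cfc_polynomial q a, ← cfc_sub (fun x => f x) (fun x => q.eval x) a]
    refine norm_cfc_le (by positivity) fun x hx => ?_
    have hxM : |x| ≤ M := by
      have := spectrum.norm_le_norm_of_mem hx
      rw [Real.norm_eq_abs] at this
      exact this.trans haM
    have := hq x (Set.mem_Icc.mpr (abs_le.mp hxM))
    rw [Real.norm_eq_abs, abs_sub_comm]
    linarith
  have hmid : Tendsto (fun n => aeval (S n) q) atTop (nhds (aeval S0 q)) :=
    ((Polynomial.continuous_aeval (p := q)).tendsto S0).comp h'
  obtain ⟨N, hN⟩ := Metric.tendsto_atTop.mp hmid (ε/3) (by positivity)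
  refine ⟨N, fun n hn => ?_⟩
  have h4 := dist_triangle4 (cfc f (S n)) (aeval (S n) q) (aeval S0 q) (cfc f S0)
  have hNn := hN n hn
  rw [dist_eq_norm]
  simp only [dist_eq_norm] at h4 hNn
  have k1 := key (S n) (hsa n) (hSM n)
  have k2 := key S0 hsa0 hS0M
  have k2' : ‖aeval S0 q - cfc f S0‖ ≤ ε/3 := by rwa [norm_sub_rev]
  linarith

lemma rhoC_lip {ρ : ℝ → ℝ} {K : NNReal} (hρ : LipschitzWith K ρ) (a b : ℂ) :
    ‖rhoC ρ a - rhoC ρ b‖ ≤ 2 * K * ‖a - b‖ := by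
  have hre : |ρ a.re - ρ b.re| ≤ K * |a.re - b.re| := by
    have := hρ.dist_le_mul a.re b.re
    rwa [Real.dist_eq, Real.dist_eq] at this
  have him : |ρ a.im - ρ b.im| ≤ K * |a.im - b.im| := by
    have := hρ.dist_le_mul a.im b.im
    rwa [Real.dist_eq, Real.dist_eq] at this
  have h1 : |a.re - b.re| ≤ ‖a - b‖ := by
    rw [← Complex.sub_re]; exact Complex.abs_re_le_norm _
  have h2 : |a.im - b.im| ≤ ‖a - b‖ := by
    rw [← Complex.sub_im]; exact Complex.abs_im_le_norm _
  calc ‖rhoC ρ a - rhoC ρ b‖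
      = ‖((ρ a.re - ρ b.re : ℝ) : ℂ) + ((ρ a.im - ρ b.im : ℝ) : ℂ) * Complex.I‖ := by
        congr 1; unfold rhoC; push_cast; ring
    _ ≤ ‖((ρ a.re - ρ b.re : ℝ) : ℂ)‖ + ‖((ρ a.im - ρ b.im : ℝ) : ℂ) * Complex.I‖ :=
        norm_add_le _ _
    _ = |ρ a.re - ρ b.re| + |ρ a.im - ρ b.im| := by
        rw [norm_mul, Complex.norm_I, mul_one, Complex.norm_real, Complex.norm_real,
          Real.norm_eq_abs, Real.norm_eq_abs]
    _ ≤ (K : ℝ) * ‖a - b‖ + K * ‖a - b‖ := by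
        refine add_le_add (hre.trans ?_) (him.trans ?_)
        · exact mul_le_mul_of_nonneg_left h1 K.coe_nonneg
        · exact mul_le_mul_of_nonneg_left h2 K.coe_nonneg
    _ = 2 * K * ‖a - b‖ := by ring


lemma layer_step {ρ : ℝ → ℝ} {K : NNReal} (hρ : LipschitzWith K ρ)
    (Gn : ℕ → L2) (G : L2) (Yn : ℕ → L2) (Z1 : L2)
    (hYn : ∀ n, ⇑(Yn n) =ᵐ[μ01] fun v => rhoC ρ (Gn n v))
    (hZ1 : ⇑Z1 =ᵐ[μ01] fun v => rhoC ρ (G v))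
    (hG : Tendsto (fun n => ‖Gn n - G‖) atTop (nhds 0)) :
    Tendsto (fun n => ‖Yn n - Z1‖) atTop (nhds 0) := by
  have hae : ∀ n, ‖Yn n - Z1‖ ≤ (2 * K) * ‖Gn n - G‖ := by
    intro n
    refine Lp.norm_le_mul_norm_of_ae_le_mul ?_
    filter_upwards [hYn n, hZ1, Lp.coeFn_sub (Yn n) Z1, Lp.coeFn_sub (Gn n) G] with v h1 h2 h3 h4
    rw [h3]
    simp only [Pi.sub_apply]
    rw [h1, h2, h4]
    simp only [Pi.sub_apply]
    exact rhoC_lip hρ _ _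
  refine squeeze_zero (fun n => norm_nonneg _) hae ?_
  have hfin : Tendsto (fun n => (2 * (K:ℝ)) * ‖Gn n - G‖) atTop (nhds ((2 * K) * 0)) :=
    tendsto_const_nhds.mul hG
  simpa using hfin

set_option maxHeartbeats 1000000

/-- Asymptotic transferability of SCNNs realized on graphons: if the induced
graphon shift operators `T_{W_{A n}}` converge in operator norm to `T_W` and the input
graphon feature maps `y n` converge to `y` featurewise in `L²[0,1]`, then the outputs of
the SCNN realized on `W_{A n}` converge featurewise to the output of the SCNN realized on
`W`. -/
theorem statement14 (Lnum : ℕ) (F : ℕ → ℕ)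
    (filt : ℕ → ℕ → ℕ → ℝ → ℝ) (hfilt : ∀ l j k, Continuous (filt l j k))
    (wt : ℕ → ℕ → ℕ → ℝ)
    (ρ : ℝ → ℝ) (Kρ : NNReal) (hρ : LipschitzWith Kρ ρ)
    (A : (n : ℕ) → Matrix (Fin n) (Fin n) ℝ) (hA : ∀ n, (A n).IsSymm)
    (W : ℝ → ℝ → ℝ) (hW : IsGraphon W)
    (T : (n : ℕ) → L2 →L[ℂ] L2) (hT : ∀ n, IsGRSO (inducedGraphon (A n)) (T n))
    (TW : L2 →L[ℂ] L2) (hTW : IsGRSO W TW)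
    (hconv : Tendsto (fun n => ‖T n - TW‖) atTop (nhds 0))
    (y : ℕ → ℕ → L2) (z : ℕ → L2)
    (hyz : ∀ k < F 0, Tendsto (fun n => ‖y n k - z k‖) atTop (nhds 0))
    (Y : ℕ → ℕ → ℕ → L2) (hY : ∀ n, IsGraphonNet Lnum F filt wt ρ (T n) (Y n))
    (hY0 : ∀ n, ∀ k < F 0, Y n 0 k = y n k)
    (Z : ℕ → ℕ → L2) (hZ : IsGraphonNet Lnum F filt wt ρ TW Z)
    (hZ0 : ∀ k < F 0, Z 0 k = z k) :
    ∀ j < F Lnum, Tendsto (fun n => ‖Y n Lnum j - Z Lnum j‖) atTop (nhds 0) := by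
  have hsaT : ∀ n, IsSelfAdjoint (T n) := fun n =>
    isSelfAdjoint_of_isGRSO (inducedGraphon_isGraphon (A n) (hA n)) (hT n)
  have hsaTW : IsSelfAdjoint TW := isSelfAdjoint_of_isGRSO hW hTW
  suffices H : ∀ l, l ≤ Lnum → ∀ j < F l, Tendsto (fun n => ‖Y n l j - Z l j‖) atTop (nhds 0) by
    exact fun j hj => H Lnum le_rfl j hj
  intro l
  induction l with
  | zero =>
    intro _ j hj
    have he : (fun n => ‖Y n 0 j - Z 0 j‖) = fun n => ‖y n j - z j‖ := by
      funext n; rw [hY0 n j hj, hZ0 j hj]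
    rw [he]; exact hyz j hj
  | succ l ih =>
    intro hl j hj
    have hl' : l < Lnum := hl
    have ihl := ih (le_of_lt hl')
    have hterm : ∀ k < F l, Tendsto (fun n =>
        ‖(wt l j k : ℂ) • (cfc (filt l j k) (T n)) (Y n l k)
          - (wt l j k : ℂ) • (cfc (filt l j k) TW) (Z l k)‖) atTop (nhds 0) := by
      intro k hk
      have hD : Tendsto (fun n => ‖cfc (filt l j k) (T n) - cfc (filt l j k) TW‖) atTop (nhds 0) :=
        cfc_tendsto (hfilt l j k) hsaT hsaTW hconv
      have hYZ := ihl k hk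
      have hbound : ∀ n, ‖(wt l j k : ℂ) • (cfc (filt l j k) (T n)) (Y n l k)
          - (wt l j k : ℂ) • (cfc (filt l j k) TW) (Z l k)‖
          ≤ |wt l j k| * (‖cfc (filt l j k) (T n) - cfc (filt l j k) TW‖
              * (‖Y n l k - Z l k‖ + ‖Z l k‖)
              + ‖cfc (filt l j k) TW‖ * ‖Y n l k - Z l k‖) := by
        intro n
        set Dn := cfc (filt l j k) (T n) - cfc (filt l j k) TW with hDn
        have hdec : (cfc (filt l j k) (T n)) (Y n l k) - (cfc (filt l j k) TW) (Z l k)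
            = Dn (Y n l k - Z l k) + Dn (Z l k) + (cfc (filt l j k) TW) (Y n l k - Z l k) := by
          simp only [hDn, ContinuousLinearMap.sub_apply, map_sub]
          abel
        rw [← smul_sub, norm_smul]
        have hw : ‖(wt l j k : ℂ)‖ = |wt l j k| := Complex.norm_real _
        rw [hw, hdec]
        refine mul_le_mul_of_nonneg_left ?_ (abs_nonneg _)
        calc ‖Dn (Y n l k - Z l k) + Dn (Z l k) + (cfc (filt l j k) TW) (Y n l k - Z l k)‖
            ≤ ‖Dn (Y n l k - Z l k)‖ + ‖Dn (Z l k)‖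
              + ‖(cfc (filt l j k) TW) (Y n l k - Z l k)‖ :=
              (norm_add_le _ _).trans (add_le_add_left (norm_add_le _ _) _)
          _ ≤ ‖Dn‖ * ‖Y n l k - Z l k‖ + ‖Dn‖ * ‖Z l k‖
              + ‖cfc (filt l j k) TW‖ * ‖Y n l k - Z l k‖ := by
              gcongr <;> exact ContinuousLinearMap.le_opNorm _ _
          _ = ‖Dn‖ * (‖Y n l k - Z l k‖ + ‖Z l k‖)
              + ‖cfc (filt l j k) TW‖ * ‖Y n l k - Z l k‖ := by ring
      refine squeeze_zero (fun n => norm_nonneg _) hbound ?_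
      have hlim : Tendsto (fun n => |wt l j k| *
          (‖cfc (filt l j k) (T n) - cfc (filt l j k) TW‖ * (‖Y n l k - Z l k‖ + ‖Z l k‖)
            + ‖cfc (filt l j k) TW‖ * ‖Y n l k - Z l k‖)) atTop
          (nhds (|wt l j k| * (0 * (0 + ‖Z l k‖) + ‖cfc (filt l j k) TW‖ * 0))) :=
        tendsto_const_nhds.mul ((hD.mul (hYZ.add tendsto_const_nhds)).add
          (tendsto_const_nhds.mul hYZ))
      simpa using hlim
    have hGconv : Tendsto (fun n =>
        ‖(∑ k ∈ Finset.range (F l), (wt l j k : ℂ) • (cfc (filt l j k) (T n)) (Y n l k))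
          - ∑ k ∈ Finset.range (F l), (wt l j k : ℂ) • (cfc (filt l j k) TW) (Z l k)‖)
        atTop (nhds 0) := by
      have hbd : ∀ n : ℕ,
          ‖(∑ k ∈ Finset.range (F l), (wt l j k : ℂ) • (cfc (filt l j k) (T n)) (Y n l k))
            - ∑ k ∈ Finset.range (F l), (wt l j k : ℂ) • (cfc (filt l j k) TW) (Z l k)‖
          ≤ ∑ k ∈ Finset.range (F l),
            ‖(wt l j k : ℂ) • (cfc (filt l j k) (T n)) (Y n l k)
              - (wt l j k : ℂ) • (cfc (filt l j k) TW) (Z l k)‖ := by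
        intro n
        rw [← Finset.sum_sub_distrib]
        exact norm_sum_le _ _
      refine squeeze_zero (fun n => norm_nonneg _) hbd ?_
      have hs := tendsto_finset_sum (Finset.range (F l))
        (fun k hk => hterm k (Finset.mem_range.mp hk))
      simpa using hs
    exact layer_step hρ
      (fun n => ∑ k ∈ Finset.range (F l), (wt l j k : ℂ) • (cfc (filt l j k) (T n)) (Y n l k))
      (∑ k ∈ Finset.range (F l), (wt l j k : ℂ) • (cfc (filt l j k) TW) (Z l k))
      (fun n => Y n (l+1) j) (Z (l+1) j)
      (fun n => hY n l hl' j hj) (hZ l hl' j hj) hGconv
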